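/- arXiv:1403.1772 — 5 statements merged into one kernel-verified Lean document; each statement's English description precedes it below -/
import Mathlib

section
/- Let n ≥ 1 and let (v_1, …, v_{2n}) be the standard orthonormal basis of ℂ^{2n}, with indices read modulo 2n (so v_{k+2n} = v_k for all integers k). For 1 ≤ i, j ≤ n let P_{ij} denote the orthogonal projection of ℂ^{2n} onto the one-dimensional subspace spanned by v_{2(i−j)+1} + v_{2(j−i)+2}, and let P denote the orthogonal projection onto the one-dimensional subspace spanned by v_1 + v_2 + ⋯ + v_{2n}. Then: each P_{ij} is an orthogonal projection; P_{ik}·P_{il} = 0 and P_{ki}·P_{li} = 0 whenever k ≠ l; and Σ_{k=1}^n P_{ik}·P = P as well as Σ_{k=1}^n P_{ki}·P = P for every i ∈ {1,…,n}. (That is, the family (P_{ij}) together with P satisfies the defining relations of the quantum semigroup B_s(n) inside the C*-algebra of operators on ℂ^{2n}.) -/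
noncomputable section

instance instNeZeroTwoMul (n : ℕ) [NeZero n] : NeZero (2 * n) :=
  ⟨by have := NeZero.ne n; omega⟩

/-- The orthogonal projection onto the line spanned by `w`, given by the formula
`x ↦ (⟨w, x⟩ / ‖w‖²) • w`. -/
noncomputable def lineProj {E : Type*} [NormedAddCommGroup E] [InnerProductSpace ℂ E]
    (w : E) : E →L[ℂ] E :=
  (((‖w‖ : ℂ)) ^ 2)⁻¹ • (innerSL ℂ w).smulRight w

open Fin.IntCast in
/-- The basis vector `v_k` of `ℂ^{2n}`, `1`-indexed, with indices read modulo `2n`. -/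
noncomputable def vv (n : ℕ) [NeZero n] (k : ℤ) : EuclideanSpace ℂ (Fin (2 * n)) :=
  EuclideanSpace.single ((k - 1 : ℤ) : Fin (2 * n)) 1

/-- `P_{ij}`, the orthogonal projection onto the span of `v_{2(i-j)+1} + v_{2(j-i)+2}`.
Here `i j : Fin n` stand for the (1-indexed) indices `i+1, j+1`; the differences agree. -/
noncomputable def Pmat (n : ℕ) [NeZero n] (i j : Fin n) :
    EuclideanSpace ℂ (Fin (2 * n)) →L[ℂ] EuclideanSpace ℂ (Fin (2 * n)) :=
  lineProj (vv n (2 * ((i : ℤ) - (j : ℤ)) + 1) + vv n (2 * ((j : ℤ) - (i : ℤ)) + 2))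

/-- `P`, the orthogonal projection onto the span of `v_1 + v_2 + ⋯ + v_{2n}`. -/
noncomputable def Pinv (n : ℕ) [NeZero n] :
    EuclideanSpace ℂ (Fin (2 * n)) →L[ℂ] EuclideanSpace ℂ (Fin (2 * n)) :=
  lineProj (∑ k : Fin (2 * n), vv n ((k : ℤ) + 1))

section Aux

open scoped ComplexConjugate

local notation "⟪" x ", " y "⟫" => @inner ℂ _ _ x y

variable {E : Type*} [NormedAddCommGroup E] [InnerProductSpace ℂ E]

lemma lineProj_apply (w x : E) : lineProj w x = ((⟪w, w⟫)⁻¹ * ⟪w, x⟫) • w := by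
  simp only [lineProj, ContinuousLinearMap.smul_apply, ContinuousLinearMap.smulRight_apply,
    innerSL_apply_apply, smul_smul, inner_self_eq_norm_sq_to_K]
  rfl

lemma lineProj_star [CompleteSpace E] (w : E) : star (lineProj w) = lineProj w := by
  have : IsSelfAdjoint (lineProj w) := by
    rw [ContinuousLinearMap.isSelfAdjoint_iff_isSymmetric]
    intro x y
    simp only [LinearMap.coe_coe, ContinuousLinearMap.coe_coe, lineProj_apply, inner_smul_left,
      inner_smul_right, map_mul, map_inv₀, inner_conj_symm]
    ring
  exact this

lemma lineProj_mul_apply (w u x : E) :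
    (lineProj w * lineProj u) x = ((⟪u, u⟫)⁻¹ * ⟪u, x⟫ * ((⟪w, w⟫)⁻¹ * ⟪w, u⟫)) • w := by
  simp only [ContinuousLinearMap.mul_apply, lineProj_apply, inner_smul_right, smul_smul]
  ring_nf

lemma lineProj_mul_of_inner_eq_zero {w u : E} (h : ⟪w, u⟫ = 0) :
    lineProj w * lineProj u = 0 := by
  ext x
  rw [lineProj_mul_apply, h]
  simp

lemma lineProj_mul_self {w : E} (hw : ⟪w, w⟫ ≠ 0) : lineProj w * lineProj w = lineProj w := by
  ext x
  rw [lineProj_mul_apply, lineProj_apply]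
  congr 1
  field_simp

lemma sum_lineProj_mul {ι : Type*} [Fintype ι] (w : ι → E) (v : E)
    (h1 : ∀ k, lineProj (w k) v = w k) (h2 : ∑ k, w k = v) :
    ∑ k, lineProj (w k) * lineProj v = lineProj v := by
  ext x
  rw [ContinuousLinearMap.sum_apply]
  simp only [ContinuousLinearMap.mul_apply]
  rw [lineProj_apply v x]
  simp only [map_smul, h1]
  rw [← Finset.smul_sum, h2, ← lineProj_apply]

variable (n : ℕ) [NeZero n]

open Fin.IntCast Fin.CommRing in
lemma cast_eq_cast_iff (x y : ℤ) :
    ((x : ℤ) : Fin (2 * n)) = ((y : ℤ) : Fin (2 * n)) ↔ (2 * (n : ℤ)) ∣ (y - x) := by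
  rw [CharP.intCast_eq_intCast (Fin (2 * n)) (2 * n)]
  rw [Int.modEq_iff_dvd]
  push_cast
  rfl

open Fin.IntCast in
lemma cast_inj_of_abs_lt {a b : ℤ} (hab : |a - b| < 2 * n) (h : ((a : ℤ) : Fin (2 * n)) = ((b : ℤ) : Fin (2 * n))) :
    a = b := by
  rw [cast_eq_cast_iff] at h
  have := Int.eq_zero_of_abs_lt_dvd h (by rw [abs_sub_comm]; exact_mod_cast hab)
  linarith

open Fin.IntCast in
lemma cast_ne_parity (x y : ℤ) :
    ((2 * x : ℤ) : Fin (2 * n)) ≠ ((2 * y + 1 : ℤ) : Fin (2 * n)) := by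
  rw [Ne, cast_eq_cast_iff]
  rintro ⟨c, hc⟩
  have h2 : (2 : ℤ) ∣ 2 * y + 1 - 2 * x := hc ▸ ⟨(n : ℤ) * c, by ring⟩
  omega

omit [NeZero n] in
lemma single_sum (p q : Fin n → Fin (2 * n)) (hp : Function.Injective p)
    (hq : Function.Injective q) (hpq : ∀ k l, p k ≠ q l) :
    ∑ k : Fin n, (EuclideanSpace.single (p k) (1:ℂ) + EuclideanSpace.single (q k) 1) =
      ∑ j : Fin (2 * n), EuclideanSpace.single j (1:ℂ) := by
  have hf : Function.Bijective (Sum.elim p q) := by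
    rw [Fintype.bijective_iff_injective_and_card]
    constructor
    · intro a b hab
      cases a <;> cases b <;> simp only [Sum.elim_inl, Sum.elim_inr] at hab
      · exact congrArg Sum.inl (hp hab)
      · exact absurd hab (hpq _ _)
      · exact absurd hab.symm (hpq _ _)
      · exact congrArg Sum.inr (hq hab)
    · simp [Fintype.card_sum]; ring
  have := Fintype.sum_bijective _ hf (fun t => EuclideanSpace.single (Sum.elim p q t) (1:ℂ))
    (fun j => EuclideanSpace.single j (1:ℂ)) (fun t => rfl)
  rw [Finset.sum_add_distrib, ← this, Fintype.sum_sum_type]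
  simp

open Fin.IntCast in
/-- First coordinate index of the vector defining `Pmat n i j`. -/
def sA (i j : Fin n) : Fin (2 * n) := ((2 * ((i : ℤ) - (j : ℤ)) : ℤ) : Fin (2 * n))

open Fin.IntCast in
/-- Second coordinate index of the vector defining `Pmat n i j`. -/
def sB (i j : Fin n) : Fin (2 * n) := ((2 * ((j : ℤ) - (i : ℤ)) + 1 : ℤ) : Fin (2 * n))

lemma sA_ne_sB (i j k l : Fin n) : sA n i j ≠ sB n k l := cast_ne_parity n _ _

lemma sA_inj_right {i k l : Fin n} (h : sA n i k = sA n i l) : k = l := by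
  have hk := k.isLt; have hl := l.isLt
  have := cast_inj_of_abs_lt n (a := 2 * ((i : ℤ) - k)) (b := 2 * ((i : ℤ) - l))
    (by rw [abs_lt]; constructor <;> omega) h
  ext; omega

lemma sA_inj_left {i k l : Fin n} (h : sA n k i = sA n l i) : k = l := by
  have hk := k.isLt; have hl := l.isLt
  have := cast_inj_of_abs_lt n (a := 2 * ((k : ℤ) - i)) (b := 2 * ((l : ℤ) - i))
    (by rw [abs_lt]; constructor <;> omega) h
  ext; omega

lemma sB_inj_right {i k l : Fin n} (h : sB n i k = sB n i l) : k = l := by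
  have hk := k.isLt; have hl := l.isLt
  have := cast_inj_of_abs_lt n (a := 2 * ((k : ℤ) - i) + 1) (b := 2 * ((l : ℤ) - i) + 1)
    (by rw [abs_lt]; constructor <;> omega) h
  ext; omega

lemma sB_inj_left {i k l : Fin n} (h : sB n k i = sB n l i) : k = l := by
  have hk := k.isLt; have hl := l.isLt
  have := cast_inj_of_abs_lt n (a := 2 * ((i : ℤ) - k) + 1) (b := 2 * ((i : ℤ) - l) + 1)
    (by rw [abs_lt]; constructor <;> omega) h
  ext; omega

/-- The vector defining `Pmat n i j`. -/
def Wvec (i j : Fin n) : EuclideanSpace ℂ (Fin (2 * n)) :=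
  EuclideanSpace.single (sA n i j) 1 + EuclideanSpace.single (sB n i j) 1

lemma Pmat_eq (i j : Fin n) : Pmat n i j = lineProj (Wvec n i j) := by
  have h1 : (2 * ((i : ℤ) - (j : ℤ)) + 1 - 1 : ℤ) = 2 * ((i : ℤ) - (j : ℤ)) := by ring
  have h2 : (2 * ((j : ℤ) - (i : ℤ)) + 2 - 1 : ℤ) = 2 * ((j : ℤ) - (i : ℤ)) + 1 := by ring
  simp only [Pmat, vv, Wvec, sA, sB, h1, h2]

open Fin.CommRing in
lemma Pinv_eq : Pinv n = lineProj (∑ j : Fin (2 * n), EuclideanSpace.single j (1:ℂ)) := by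
  simp only [Pinv, vv, add_sub_cancel_right, Int.cast_natCast, Fin.cast_val_eq_self]

lemma inner_single_single (a b : Fin (2 * n)) :
    ⟪(EuclideanSpace.single a (1:ℂ)), EuclideanSpace.single b 1⟫ = if b = a then 1 else 0 := by
  simp [EuclideanSpace.inner_single_left, EuclideanSpace.single_apply]
  simp only [eq_comm]

lemma inner_Wvec_self (i j : Fin n) : ⟪Wvec n i j, Wvec n i j⟫ = 2 := by
  have h := sA_ne_sB n i j i j
  simp [Wvec, inner_add_left, inner_add_right, inner_single_single, h, h.symm, if_neg, -inner_self_eq_norm_sq_to_K]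
  norm_num

lemma inner_Wvec_Wvec {a b c d : Fin (2 * n)} (hac : a ≠ c) (had : a ≠ d) (hbc : b ≠ c)
    (hbd : b ≠ d) :
    ⟪(EuclideanSpace.single a (1:ℂ) + EuclideanSpace.single b 1),
      (EuclideanSpace.single c (1:ℂ) + EuclideanSpace.single d 1)⟫ = 0 := by
  simp [inner_add_left, inner_add_right, inner_single_single, hac.symm, had.symm, hbc.symm, hbd.symm]

lemma inner_Wvec_sum (i j : Fin n) :
    ⟪Wvec n i j, ∑ m : Fin (2 * n), EuclideanSpace.single m (1:ℂ)⟫ = 2 := by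
  simp [Wvec, inner_add_left, inner_sum, inner_single_single, Finset.sum_add_distrib,
    Finset.sum_ite_eq']
  norm_num

lemma lineProj_Wvec_sum (i j : Fin n) :
    lineProj (Wvec n i j) (∑ m : Fin (2 * n), EuclideanSpace.single m (1:ℂ)) = Wvec n i j := by
  rw [lineProj_apply, inner_Wvec_self, inner_Wvec_sum]
  norm_num

end Aux

/-- The family `(P_{ij})` together with `P` satisfies the defining relations of the quantum
semigroup `B_s(n)` inside the operators on `ℂ^{2n}`. -/
theorem stmt0 (n : ℕ) [NeZero n] :
    (∀ i j : Fin n, star (Pmat n i j) = Pmat n i j ∧ Pmat n i j * Pmat n i j = Pmat n i j) ∧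
    (∀ i k l : Fin n, k ≠ l → Pmat n i k * Pmat n i l = 0) ∧
    (∀ i k l : Fin n, k ≠ l → Pmat n k i * Pmat n l i = 0) ∧
    (∀ i : Fin n, ∑ k : Fin n, Pmat n i k * Pinv n = Pinv n) ∧
    (∀ i : Fin n, ∑ k : Fin n, Pmat n k i * Pinv n = Pinv n) := by
  refine ⟨?_, ?_, ?_, ?_, ?_⟩
  · intro i j
    rw [Pmat_eq]
    refine ⟨lineProj_star _, lineProj_mul_self ?_⟩
    rw [inner_Wvec_self]
    norm_num
  · intro i k l hkl
    rw [Pmat_eq, Pmat_eq]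
    refine lineProj_mul_of_inner_eq_zero (inner_Wvec_Wvec n ?_ ?_ ?_ ?_)
    · exact fun h => hkl (sA_inj_right n h)
    · exact sA_ne_sB n i k i l
    · exact fun h => (sA_ne_sB n i l i k) h.symm
    · exact fun h => hkl (sB_inj_right n h)
  · intro i k l hkl
    rw [Pmat_eq, Pmat_eq]
    refine lineProj_mul_of_inner_eq_zero (inner_Wvec_Wvec n ?_ ?_ ?_ ?_)
    · exact fun h => hkl (sA_inj_left n h)
    · exact sA_ne_sB n k i l i
    · exact fun h => (sA_ne_sB n l i k i) h.symm
    · exact fun h => hkl (sB_inj_left n h)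
  · intro i
    rw [Pinv_eq]
    simp only [Pmat_eq]
    refine sum_lineProj_mul (fun k => Wvec n i k) _ (fun k => lineProj_Wvec_sum n i k) ?_
    exact single_sum n _ _ (fun k l h => sA_inj_right n h) (fun k l h => sB_inj_right n h)
      (fun k l => sA_ne_sB n i k i l)
  · intro i
    rw [Pinv_eq]
    simp only [Pmat_eq]
    refine sum_lineProj_mul (fun k => Wvec n k i) _ (fun k => lineProj_Wvec_sum n k i) ?_
    exact single_sum n _ _ (fun k l h => sA_inj_left n h) (fun k l h => sB_inj_left n h)
      (fun k l => sA_ne_sB n k i l i)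

end
end

section
/- Let R be a ring, n ≥ 1, and let u : {1,…,n}×{1,…,n} → R satisfy u_{ik}·u_{il} = 0 and u_{ki}·u_{li} = 0 whenever k ≠ l. Let (i₁,…,i_k) and (j₁,…,j_k) be two tuples in {1,…,n} which do NOT have the same run structure, i.e. there exists q ∈ {1,…,k−1} such that exactly one of the equalities i_q = i_{q+1} and j_q = j_{q+1} holds. Then u_{j₁i₁}·u_{j₂i₂}⋯u_{j_k i_k} = 0. -/
lemma aux_prod_zero {R : Type*} [Ring R] :
    ∀ (l : List R) (q : ℕ) (h : q + 1 < l.length),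
      l[q] * l[q + 1] = 0 → l.prod = 0 := by
  intro l
  induction l with
  | nil => intro q h; simp at h
  | cons a l ih =>
    intro q h hz
    cases q with
    | zero =>
      match l, h with
      | b :: l', _ =>
        simp only [List.prod_cons, ← mul_assoc]
        simp only [List.getElem_cons_zero, List.getElem_cons_succ] at hz
        simp [hz]
    | succ q =>
      simp only [List.prod_cons]
      rw [ih q (by simpa using h) (by simpa using hz), mul_zero]

/-- If the `u_{ij}` satisfy the row and column orthogonality relations and the tuples
`(i₁,…,i_k)` and `(j₁,…,j_k)` do not have the same run structure (there is a `q` such that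
exactly one of `i_q = i_{q+1}` and `j_q = j_{q+1}` holds), then
`u_{j₁i₁}·u_{j₂i₂}⋯u_{j_k i_k} = 0`. -/
theorem stmt3 {R : Type*} [Ring R] (n : ℕ) (hn : 1 ≤ n)
    (u : Fin n → Fin n → R)
    (hrow : ∀ i k l : Fin n, k ≠ l → u i k * u i l = 0)
    (hcol : ∀ i k l : Fin n, k ≠ l → u k i * u l i = 0)
    (k : ℕ) (i j : Fin k → Fin n)
    (hdiff : ∃ q : ℕ, ∃ hq : q + 1 < k,
      Xor' (i ⟨q, Nat.lt_of_succ_lt hq⟩ = i ⟨q + 1, hq⟩)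
           (j ⟨q, Nat.lt_of_succ_lt hq⟩ = j ⟨q + 1, hq⟩)) :
    (List.ofFn fun t : Fin k => u (j t) (i t)).prod = 0 := by
  obtain ⟨q, hq, hx⟩ := hdiff
  apply aux_prod_zero _ q (by simpa using hq)
  simp only [List.getElem_ofFn]
  rcases hx with ⟨hi, hj⟩ | ⟨hj, hi⟩
  · rw [show (i ⟨q, by omega⟩ : Fin n) = i ⟨q + 1, by omega⟩ from hi]
    exact hcol _ _ _ hj
  · rw [show (j ⟨q, by omega⟩ : Fin n) = j ⟨q + 1, by omega⟩ from hj]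
    exact hrow _ _ _ hi
end

section
/- Let (A, B, E) be an operator-valued probability space with A unital, and let (x_i)_{i=1,…,n} be a family in A which is identically distributed and boolean independent over B with respect to E. If two tuples (i₁,…,i_k) and (j₁,…,j_k) in {1,…,n} have the same run structure, then for all b₁,…,b_{k−1} ∈ B ∪ {1}: E[x_{i₁}·b₁·x_{i₂}·b₂⋯b_{k−1}·x_{i_k}] = E[x_{j₁}·b₁·x_{j₂}·b₂⋯b_{k−1}·x_{j_k}]. -/
/-- Evaluation at `x` of the `B`-monomial `b₀ X b₁ X ⋯ X b_m` encoded by the list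
`[b₀, b₁, …, b_m]`: it is `b₀ * x * b₁ * x * ⋯ * x * b_m`. -/
def monEval {A : Type*} [Mul A] (x : A) : List A → A
  | [] => x
  | [b] => b
  | b :: c :: rest => b * x * monEval x (c :: rest)

/-- Evaluation at `x` of a `B`-polynomial, encoded as a formal linear combination
(a list of coefficient–monomial pairs). -/
def polyEval {A : Type*} [Ring A] [Algebra ℂ A] (x : A) (p : List (ℂ × List A)) : A :=
  (p.map fun q => q.1 • monEval x q.2).sum

/-- `p` encodes an element of `B⟨X⟩₀`: each monomial `b₀ X b₁ X ⋯ X b_m` has `m ≥ 1`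
(i.e. the coefficient list has length ≥ 2) and each `b_t` lies in `B ∪ ℂ·1`. -/
def IsPoly₀ {A : Type*} [Ring A] [Algebra ℂ A] (B : NonUnitalSubalgebra ℂ A)
    (p : List (ℂ × List A)) : Prop :=
  ∀ q ∈ p, 2 ≤ q.2.length ∧ ∀ b ∈ q.2, b ∈ B ∨ ∃ lam : ℂ, b = lam • (1 : A)

/-- The family `x` is identically distributed with respect to `E` over `B`. -/
def IdentDistrib' {A : Type*} [Ring A] [Algebra ℂ A] (B : NonUnitalSubalgebra ℂ A)
    (E : A →ₗ[ℂ] A) {ι : Type*} (x : ι → A) : Prop :=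
  ∀ (i j : ι) (p : List (ℂ × List A)), IsPoly₀ B p →
    E (polyEval (x i) p) = E (polyEval (x j) p)

/-- The family `x` is boolean independent over `B` with respect to `E`:
`E[p₁(x_{i₁})⋯p_k(x_{i_k})] = E[p₁(x_{i₁})]⋯E[p_k(x_{i_k})]` whenever consecutive indices
are distinct and the `p_t` are `B`-polynomials without constant term. -/
def BoolIndep {A : Type*} [Ring A] [Algebra ℂ A] (B : NonUnitalSubalgebra ℂ A)
    (E : A →ₗ[ℂ] A) {ι : Type*} (x : ι → A) : Prop :=
  ∀ (k : ℕ) (idx : Fin (k + 1) → ι),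
    (∀ t : Fin k, idx t.castSucc ≠ idx t.succ) →
    ∀ p : Fin (k + 1) → List (ℂ × List A), (∀ t, IsPoly₀ B (p t)) →
      E ((List.ofFn fun t => polyEval (x (idx t)) (p t)).prod) =
        (List.ofFn fun t => E (polyEval (x (idx t)) (p t))).prod

set_option linter.unusedSectionVars false

section aux
variable {A : Type*} [Ring A] [Algebra ℂ A] {n : ℕ}

/-- Run decomposition: `runsAux i0 l = (cs, rs)` where `cs` are the interior coefficients of the
first run (the one containing the initial index `i0`) and `rs` is the list of remaining runs,
each recorded as `(boundary coefficient, index, interior coefficients)`. -/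
def runsAux : Fin n → List (A × Fin n) → List A × List (A × Fin n × List A)
  | _, [] => ([], [])
  | i0, (b, i) :: rest =>
    if i = i0 then
      ((b :: (runsAux i0 rest).1), (runsAux i0 rest).2)
    else
      ([], (b, i, (runsAux i rest).1) :: (runsAux i rest).2)

/-- Evaluation of a single run `b₀ · y · c₁ · y ⋯ c_r · y`. -/
def runEval (y : A) (b0 : A) (cs : List A) : A := b0 * y * (cs.map fun c => c * y).prod

theorem prod_runs (x : Fin n → A) :
    ∀ (l : List (A × Fin n)) (i0 : Fin n),
      x i0 * (l.map fun p => p.1 * x p.2).prod =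
        runEval (x i0) 1 (runsAux i0 l).1 *
          ((runsAux i0 l).2.map fun r => runEval (x r.2.1) r.1 r.2.2).prod
  | [], i0 => by simp [runsAux, runEval]
  | (b, i) :: l, i0 => by
    by_cases h : i = i0
    · subst h
      have IH := prod_runs x l i
      simp only [runsAux, reduceIte, runEval, one_mul, List.map_cons, List.prod_cons,
        mul_assoc] at IH ⊢
      rw [IH]
    · have IH := prod_runs x l i
      simp only [runsAux, if_neg h, runEval, one_mul, mul_one, List.map_cons, List.prod_cons,
        List.map_nil, List.prod_nil, mul_assoc] at IH ⊢
      rw [IH]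

theorem runsAux_chain : ∀ (l : List (A × Fin n)) (i0 : Fin n),
    List.Chain (fun a b : Fin n => a ≠ b) i0 ((runsAux i0 l).2.map fun r => r.2.1)
  | [], i0 => by simp [runsAux]; exact List.Chain.nil
  | (b, i) :: l, i0 => by
    by_cases h : i = i0
    · subst h; simpa [runsAux] using runsAux_chain l i
    · simp only [runsAux, if_neg h, List.map_cons]
      exact List.Chain.cons (fun e => h e.symm) (runsAux_chain l i)

theorem runsAux_good (P : A → Prop) (h1 : P 1) : ∀ (l : List (A × Fin n)) (i0 : Fin n),
    (∀ p ∈ l, P p.1) →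
    (∀ c ∈ (runsAux i0 l).1, P c) ∧
      ∀ r ∈ (runsAux i0 l).2, P r.1 ∧ ∀ c ∈ r.2.2, P c
  | [], i0 => by simp [runsAux]
  | (b, i) :: l, i0 => by
    intro hl
    have hb : P b := hl _ List.mem_cons_self
    have hl' : ∀ p ∈ l, P p.1 := fun p hp => hl p (List.mem_cons_of_mem _ hp)
    by_cases h : i = i0
    · subst h
      obtain ⟨g1, g2⟩ := runsAux_good P h1 l i hl'
      simp only [runsAux, reduceIte]
      exact ⟨by simpa using And.intro hb g1, g2⟩
    · obtain ⟨g1, g2⟩ := runsAux_good P h1 l i hl'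
      simp only [runsAux, if_neg h, List.mem_cons]
      refine ⟨by simp, fun r hr => ?_⟩
      rcases hr with hr | hr
      · subst hr; exact ⟨hb, g1⟩
      · exact g2 r hr

/-- Two decorated index words have the same run structure. -/
def SameRun : Fin n → List (A × Fin n) → Fin n → List (A × Fin n) → Prop
  | _, [], _, [] => True
  | i0, p :: l, j0, q :: m => p.1 = q.1 ∧ (p.2 = i0 ↔ q.2 = j0) ∧ SameRun p.2 l q.2 m
  | _, _, _, _ => False

theorem runsAux_congr : ∀ (li : List (A × Fin n)) (lj : List (A × Fin n)) (i0 j0 : Fin n),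
    SameRun i0 li j0 lj →
    (runsAux i0 li).1 = (runsAux j0 lj).1 ∧
      (runsAux i0 li).2.map (fun r => (r.1, r.2.2)) =
        (runsAux j0 lj).2.map (fun r => (r.1, r.2.2))
  | [], [], _, _ => fun _ => by simp [runsAux]
  | [], _ :: _, _, _ => fun h => absurd h (by simp [SameRun])
  | _ :: _, [], _, _ => fun h => absurd h (by simp [SameRun])
  | (b, i) :: li, (c, j) :: lj, i0, j0 => by
    rintro ⟨hb, hiff, hrec⟩
    simp only at hb hiff hrec
    obtain ⟨g1, g2⟩ := runsAux_congr li lj i j hrec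
    by_cases h : i = i0
    · have h' : j = j0 := hiff.mp h
      subst h; subst h'
      simp only [runsAux, reduceIte]
      exact ⟨by rw [hb, g1], g2⟩
    · have h' : ¬ j = j0 := fun e => h (hiff.mpr e)
      simp only [runsAux, if_neg h, if_neg h', List.map_cons]
      exact ⟨trivial, by rw [hb, g1, g2]⟩

theorem sameRun_ofFn : ∀ (k : ℕ) (i j : Fin (k+1) → Fin n) (b : Fin k → A),
    (∀ t : Fin k, (i t.castSucc = i t.succ ↔ j t.castSucc = j t.succ)) →
    SameRun (i 0) (List.ofFn fun t => (b t, i t.succ)) (j 0)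
      (List.ofFn fun t => (b t, j t.succ))
  | 0, i, j, b => fun _ => by simp [SameRun]
  | (k+1), i, j, b => by
    intro hrun
    have IH := sameRun_ofFn k (fun t => i t.succ) (fun t => j t.succ) (fun t => b t.succ)
      (fun t => by
        have := hrun t.succ
        exact this)
    rw [List.ofFn_succ, List.ofFn_succ]
    refine ⟨rfl, ?_, ?_⟩
    · have := hrun 0
      simp only [Fin.castSucc_zero] at this
      exact ⟨fun e => (this.mp e.symm).symm, fun e => (this.mpr e.symm).symm⟩
    · exact IH

theorem monEval_run (y : A) : ∀ (cs : List A) (b0 : A),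
    monEval y (b0 :: cs ++ [1]) = b0 * y * (cs.map fun c => c * y).prod
  | [], b0 => by simp [monEval]
  | c :: cs, b0 => by
    have IH := monEval_run y cs c
    simp only [List.cons_append, List.append_eq, monEval] at IH ⊢
    rw [IH]
    simp [mul_assoc]

theorem polyEval_run (y : A) (b0 : A) (cs : List A) :
    polyEval y [((1:ℂ), b0 :: cs ++ [1])] = runEval y b0 cs := by
  simp only [polyEval, List.map_cons, List.map_nil, List.sum_cons, List.sum_nil, one_smul,
    add_zero, monEval_run]
  rfl

theorem ofFn_cast_map {α β : Type*} (L : List α) (m : ℕ) (h : L.length = m) (f : α → β) :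
    List.ofFn (fun t : Fin m => f (L.get (Fin.cast h.symm t))) = L.map f := by
  subst h
  simp

theorem boolIndep_list {B : NonUnitalSubalgebra ℂ A} {E : A →ₗ[ℂ] A} {x : Fin n → A}
    (hbool : BoolIndep B E x) (hd : Fin n × List (ℂ × List A))
    (tl : List (Fin n × List (ℂ × List A)))
    (hch : List.Chain (fun a b : Fin n × List (ℂ × List A) => a.1 ≠ b.1) hd tl)
    (hp : ∀ r ∈ hd :: tl, IsPoly₀ B r.2) :
    E (((hd :: tl).map fun r => polyEval (x r.1) r.2).prod) =
      ((hd :: tl).map fun r => E (polyEval (x r.1) r.2)).prod := by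
  set L := hd :: tl with hL
  have hlen : L.length = tl.length + 1 := by simp [hL]
  have hch' : List.Chain' (fun a b : Fin n × List (ℂ × List A) => a.1 ≠ b.1) L := hch
  have hdist : ∀ t : Fin tl.length,
      (L.get (Fin.cast hlen.symm t.castSucc)).1 ≠ (L.get (Fin.cast hlen.symm t.succ)).1 := by
    intro t
    have := List.isChain_iff_getElem.mp hch' t.val (by simpa [hL] using t.isLt)
    exact this
  have key := hbool tl.length (fun t => (L.get (Fin.cast hlen.symm t)).1) hdist
    (fun t => (L.get (Fin.cast hlen.symm t)).2) (fun t => hp _ (L.get_mem _))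
  rw [ofFn_cast_map L _ hlen (fun r => polyEval (x r.1) r.2),
    ofFn_cast_map L _ hlen (fun r => E (polyEval (x r.1) r.2))] at key
  exact key

/-- Convert a run `(b₀, idx, cs)` into the pair (index, polynomial). -/
def runPoly (r : A × Fin n × List A) : Fin n × List (ℂ × List A) :=
  (r.2.1, [((1:ℂ), r.1 :: r.2.2 ++ [1])])

theorem isPoly_run (B : NonUnitalSubalgebra ℂ A) (b0 : A) (cs : List A)
    (hb0 : b0 ∈ B ∨ ∃ lam : ℂ, b0 = lam • (1 : A))
    (hcs : ∀ c ∈ cs, c ∈ B ∨ ∃ lam : ℂ, c = lam • (1 : A)) :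
    IsPoly₀ B [((1:ℂ), b0 :: cs ++ [1])] := by
  intro q hq
  simp only [List.mem_singleton] at hq
  subst hq
  constructor
  · simp only [List.length_cons, List.length_append, List.length_singleton]
    omega
  · intro c hc
    rcases List.mem_cons.mp hc with rfl | hc2
    · exact hb0
    · rcases List.mem_append.mp hc2 with h | h
      · exact hcs c h
      · rw [List.mem_singleton.mp h]
        exact Or.inr ⟨1, (one_smul ℂ (1:A)).symm⟩

end aux

/-- If `(x_i)` is identically distributed and boolean independent over `B` w.r.t. `E`, and the
tuples `(i₀,…,i_k)` and `(j₀,…,j_k)` have the same run structure, then for every choice of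
`b_t ∈ B ∪ {1}`,
`E[x_{i₀} b₁ x_{i₁} ⋯ b_k x_{i_k}] = E[x_{j₀} b₁ x_{j₁} ⋯ b_k x_{j_k}]`. -/
theorem stmt4 {A : Type*} [Ring A] [Algebra ℂ A] (B : NonUnitalSubalgebra ℂ A)
    (E : A →ₗ[ℂ] A)
    (hrange : ∀ a : A, E a ∈ B)
    (hbimod : ∀ b₁ ∈ B, ∀ b₂ ∈ B, ∀ a : A, E (b₁ * a * b₂) = b₁ * E a * b₂)
    (n : ℕ) (x : Fin n → A)
    (hid : IdentDistrib' B E x) (hbool : BoolIndep B E x)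
    (k : ℕ) (i j : Fin (k + 1) → Fin n)
    (hrun : ∀ t : Fin k, (i t.castSucc = i t.succ ↔ j t.castSucc = j t.succ))
    (b : Fin k → A) (hb : ∀ t, b t ∈ B ∨ b t = 1) :
    E (x (i 0) * (List.ofFn fun t : Fin k => b t * x (i t.succ)).prod) =
      E (x (j 0) * (List.ofFn fun t : Fin k => b t * x (j t.succ)).prod) := by
  classical
  set Good : A → Prop := fun a => a ∈ B ∨ ∃ lam : ℂ, a = lam • (1 : A) with hGood
  have hGood1 : Good 1 := Or.inr ⟨1, (one_smul ℂ (1:A)).symm⟩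
  set li : List (A × Fin n) := List.ofFn fun t => (b t, i t.succ) with hli
  set lj : List (A × Fin n) := List.ofFn fun t => (b t, j t.succ) with hlj
  have hgi : ∀ p ∈ li, Good p.1 := by
    intro p hp
    rw [hli, List.mem_ofFn] at hp
    obtain ⟨t, ht⟩ := hp
    rcases hb t with h | h
    · rw [← ht]; exact Or.inl h
    · rw [← ht]; show Good (b t); rw [h]; exact hGood1
  have hgj : ∀ p ∈ lj, Good p.1 := by
    intro p hp
    rw [hlj, List.mem_ofFn] at hp
    obtain ⟨t, ht⟩ := hp
    rcases hb t with h | h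
    · rw [← ht]; exact Or.inl h
    · rw [← ht]; show Good (b t); rw [h]; exact hGood1
  -- rewrite the two products via run decomposition
  have hmi : (List.ofFn fun t : Fin k => b t * x (i t.succ))
      = li.map fun p => p.1 * x p.2 := by
    rw [hli, List.map_ofFn]; rfl
  have hmj : (List.ofFn fun t : Fin k => b t * x (j t.succ))
      = lj.map fun p => p.1 * x p.2 := by
    rw [hlj, List.map_ofFn]; rfl
  rw [hmi, hmj, prod_runs x li (i 0), prod_runs x lj (j 0)]
  -- run data
  obtain ⟨hgi1, hgi2⟩ := runsAux_good Good hGood1 li (i 0) hgi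
  obtain ⟨hgj1, hgj2⟩ := runsAux_good Good hGood1 lj (j 0) hgj
  -- the poly lists
  set csi := (runsAux (i 0) li).1 with hcsi
  set rsi := (runsAux (i 0) li).2 with hrsi
  set csj := (runsAux (j 0) lj).1 with hcsj
  set rsj := (runsAux (j 0) lj).2 with hrsj
  have hprod_i : runEval (x (i 0)) 1 csi * (rsi.map fun r => runEval (x r.2.1) r.1 r.2.2).prod
      = (((runPoly ((1:A), i 0, csi)) :: rsi.map runPoly).map
          fun r => polyEval (x r.1) r.2).prod := by
    simp only [List.map_cons, List.prod_cons, List.map_map]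
    congr 1
    · exact (polyEval_run _ _ _).symm
    · exact congrArg List.prod (List.map_congr_left fun r _ => (polyEval_run _ _ _).symm)
  have hprod_j : runEval (x (j 0)) 1 csj * (rsj.map fun r => runEval (x r.2.1) r.1 r.2.2).prod
      = (((runPoly ((1:A), j 0, csj)) :: rsj.map runPoly).map
          fun r => polyEval (x r.1) r.2).prod := by
    simp only [List.map_cons, List.prod_cons, List.map_map]
    congr 1
    · exact (polyEval_run _ _ _).symm
    · exact congrArg List.prod (List.map_congr_left fun r _ => (polyEval_run _ _ _).symm)
  rw [hprod_i, hprod_j]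
  -- chains
  have hchi : List.Chain (fun a b : Fin n × List (ℂ × List A) => a.1 ≠ b.1)
      (runPoly ((1:A), i 0, csi)) (rsi.map runPoly) := by
    have h1 := (List.isChain_cons_map (R := fun a b : Fin n => a ≠ b)
      (b := ((1:A), i 0, csi)) (fun r : A × Fin n × List A => r.2.1)).mp (runsAux_chain li (i 0))
    exact (List.isChain_cons_map (R := fun a b : Fin n × List (ℂ × List A) => a.1 ≠ b.1)
      (b := ((1:A), i 0, csi)) runPoly).mpr h1
  have hchj : List.Chain (fun a b : Fin n × List (ℂ × List A) => a.1 ≠ b.1)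
      (runPoly ((1:A), j 0, csj)) (rsj.map runPoly) := by
    have h1 := (List.isChain_cons_map (R := fun a b : Fin n => a ≠ b)
      (b := ((1:A), j 0, csj)) (fun r : A × Fin n × List A => r.2.1)).mp (runsAux_chain lj (j 0))
    exact (List.isChain_cons_map (R := fun a b : Fin n × List (ℂ × List A) => a.1 ≠ b.1)
      (b := ((1:A), j 0, csj)) runPoly).mpr h1
  -- polynomial conditions
  have hpi : ∀ r ∈ (runPoly ((1:A), i 0, csi)) :: rsi.map runPoly, IsPoly₀ B r.2 := by
    intro r hr
    rcases List.mem_cons.mp hr with rfl | hr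
    · exact isPoly_run B 1 csi hGood1 hgi1
    · obtain ⟨s, hs, rfl⟩ := List.mem_map.mp hr
      exact isPoly_run B s.1 s.2.2 (hgi2 s hs).1 (hgi2 s hs).2
  have hpj : ∀ r ∈ (runPoly ((1:A), j 0, csj)) :: rsj.map runPoly, IsPoly₀ B r.2 := by
    intro r hr
    rcases List.mem_cons.mp hr with rfl | hr
    · exact isPoly_run B 1 csj hGood1 hgj1
    · obtain ⟨s, hs, rfl⟩ := List.mem_map.mp hr
      exact isPoly_run B s.1 s.2.2 (hgj2 s hs).1 (hgj2 s hs).2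
  rw [boolIndep_list hbool _ _ hchi hpi, boolIndep_list hbool _ _ hchj hpj]
  -- now compare the two products of expectations
  obtain ⟨hcs, hrs⟩ := runsAux_congr li lj (i 0) (j 0) (sameRun_ofFn k i j b hrun)
  have hcs' : csi = csj := hcs
  have hrs' : rsi.map (fun r => (r.1, r.2.2)) = rsj.map (fun r => (r.1, r.2.2)) := hrs
  simp only [List.map_cons, List.prod_cons, List.map_map]
  congr 1
  · -- heads
    rw [hcs']
    exact hid (i 0) (j 0) [((1:ℂ), (1:A) :: csj ++ [1])] (isPoly_run B 1 csj hGood1 hgj1)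
  · -- tails
    have hfi : rsi.map ((fun r => E (polyEval (x r.1) r.2)) ∘ runPoly)
        = rsi.map ((fun s : A × List A =>
            E (polyEval (x (i 0)) [((1:ℂ), s.1 :: s.2 ++ [1])])) ∘ fun r => (r.1, r.2.2)) := by
      refine List.map_congr_left fun r hr => ?_
      exact hid r.2.1 (i 0) _ (isPoly_run B r.1 r.2.2 (hgi2 r hr).1 (hgi2 r hr).2)
    have hfj : rsj.map ((fun r => E (polyEval (x r.1) r.2)) ∘ runPoly)
        = rsj.map ((fun s : A × List A =>
            E (polyEval (x (i 0)) [((1:ℂ), s.1 :: s.2 ++ [1])])) ∘ fun r => (r.1, r.2.2)) := by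
      refine List.map_congr_left fun r hr => ?_
      exact hid r.2.1 (i 0) _ (isPoly_run B r.1 r.2.2 (hgj2 r hr).1 (hgj2 r hr).2)
    rw [hfi, hfj, ← List.map_map, ← List.map_map, hrs']
end

section
/- Let (A, B, E) be an operator-valued probability space with A unital, let (x_i)_{i=1,…,n} be identically distributed and boolean independent over B with respect to E, and let φ₀ be a linear functional on B. Then the joint distribution of (x₁,…,x_n) is invariant under the linear coaction of the boolean permutation quantum semigroup 𝓑_s(n): for every unital C*-algebra C, every family (u_{ij}, P) of elements of C satisfying the 𝓑_s(n) relations, every k ≥ 1 and all i₁,…,i_k ∈ {1,…,n}: Σ_{j₁,…,j_k=1}^n φ₀(E[x_{j₁}·x_{j₂}⋯x_{j_k}])·(P·u_{j₁i₁}·u_{j₂i₂}⋯u_{j_k i_k}·P) = φ₀(E[x_{i₁}·x_{i₂}⋯x_{i_k}])·P. -/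
/-- The family `(u_{ij}, P)` satisfies the defining relations of the boolean permutation
quantum semigroup `𝓑_s(n)`. -/
def BsRel {C : Type*} [Ring C] [StarRing C] {n : ℕ} (u : Fin n → Fin n → C) (P : C) : Prop :=
  (∀ i j, star (u i j) = u i j) ∧
  (∀ i j, u i j * u i j = u i j) ∧
  (∀ i k l, k ≠ l → u i k * u i l = 0) ∧
  (∀ i k l, k ≠ l → u k i * u l i = 0) ∧
  star P = P ∧ P * P = P ∧
  (∀ i, (∑ k, u k i) * P = P)

namespace Stmt5Aux

variable {α : Type*} {β : Type*} [DecidableEq α] [DecidableEq β]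

/-- Run-length encoding of a list. -/
def rle : List α → List (α × ℕ)
  | [] => []
  | a :: l =>
    match rle l with
    | [] => [(a, 1)]
    | (b, m) :: r => if a = b then (b, m + 1) :: r else (a, 1) :: (b, m) :: r

lemma rle_cons (a : α) (l : List α) :
    rle (a :: l) = match rle l with
      | [] => [(a, 1)]
      | (b, m) :: r => if a = b then (b, m + 1) :: r else (a, 1) :: (b, m) :: r := by
  rfl

lemma rle_cons_nil (a : α) {l : List α} (h : rle l = []) : rle (a :: l) = [(a, 1)] := by
  rw [rle_cons, h]

lemma rle_cons_cons (a : α) {l : List α} {b : α} {m : ℕ} {r : List (α × ℕ)}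
    (h : rle l = (b, m) :: r) :
    rle (a :: l) = if a = b then (b, m + 1) :: r else (a, 1) :: (b, m) :: r := by
  rw [rle_cons, h]

lemma rle_cons_head (a : α) (l : List α) : ∃ m r, rle (a :: l) = (a, m) :: r ∧ 1 ≤ m := by
  rw [rle_cons]
  cases h : rle l with
  | nil => exact ⟨1, [], rfl, le_refl 1⟩
  | cons q r =>
    obtain ⟨b, m⟩ := q
    by_cases hab : a = b
    · subst hab; exact ⟨m + 1, r, by simp, by omega⟩
    · exact ⟨1, (b, m) :: r, by simp [hab], le_refl 1⟩

lemma rle_eq_nil_iff {l : List α} : rle l = [] ↔ l = [] := by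
  cases l with
  | nil => simp [rle]
  | cons a l =>
    obtain ⟨m, r, h, _⟩ := rle_cons_head a l
    simp [h]

lemma rle_sndpos : ∀ (l : List α), ∀ q ∈ rle l, 1 ≤ q.2 := by
  intro l
  induction l with
  | nil => simp [rle]
  | cons a l ih =>
    intro q hq
    cases h : rle l with
    | nil => rw [rle_cons_nil a h] at hq; simp at hq; simp [hq]
    | cons p r =>
      obtain ⟨b, m⟩ := p
      rw [rle_cons_cons a h] at hq
      by_cases hab : a = b
      · simp [hab] at hq
        rcases hq with hq | hq
        · subst hq; omega
        · exact ih q (h ▸ List.mem_cons_of_mem _ hq)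
      · simp [hab] at hq
        rcases hq with hq | hq | hq
        · subst hq; omega
        · subst hq; exact ih (b, m) (h ▸ List.mem_cons_self)
        · exact ih q (h ▸ List.mem_cons_of_mem _ hq)

lemma rle_chain' : ∀ (l : List α), List.Chain' (fun p q => p.1 ≠ q.1) (rle l) := by
  intro l
  induction l with
  | nil => simp [rle, List.Chain']
  | cons a l ih =>
    cases h : rle l with
    | nil => rw [rle_cons_nil a h]; simp [List.Chain']
    | cons p r =>
      obtain ⟨b, m⟩ := p
      rw [h] at ih
      rw [rle_cons_cons a h]
      by_cases hab : a = b
      · subst hab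
        rw [if_pos rfl]
        rw [List.Chain', List.isChain_cons] at ih ⊢
        exact ⟨fun y hy => ih.1 y hy, ih.2⟩
      · simp only [if_neg hab]
        exact List.isChain_cons_cons.mpr ⟨hab, ih⟩

lemma rle_prod {M : Type*} [Monoid M] (f : α → M) :
    ∀ (l : List α), ((rle l).map fun q => f q.1 ^ q.2).prod = (l.map f).prod := by
  intro l
  induction l with
  | nil => simp [rle]
  | cons a l ih =>
    cases h : rle l with
    | nil =>
      rw [rle_cons_nil a h, rle_eq_nil_iff.mp h]
      simp
    | cons p r =>
      obtain ⟨b, m⟩ := p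
      rw [h] at ih
      rw [rle_cons_cons a h]
      by_cases hab : a = b
      · subst hab
        rw [if_pos rfl]
        simp only [List.map_cons, List.prod_cons] at ih ⊢
        rw [pow_succ', mul_assoc, ih]
      · simp only [if_neg hab, List.map_cons, List.prod_cons] at ih ⊢
        rw [pow_one, ih]

/-- Two lists have the same consecutive-equality pattern. -/
inductive Pat : List α → List β → Prop
  | nil : Pat [] []
  | single (a : α) (b : β) : Pat [a] [b]
  | cons (a a' : α) (b b' : β) (l : List α) (m : List β) :
      ((a = a') ↔ (b = b')) → Pat (a' :: l) (b' :: m) → Pat (a :: a' :: l) (b :: b' :: m)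

lemma pat_snd : ∀ {w₁ : List α} {w₂ : List β}, Pat w₁ w₂ →
    (rle w₁).map Prod.snd = (rle w₂).map Prod.snd := by
  intro w₁ w₂ h
  induction h with
  | nil => rfl
  | single a b => simp [rle]
  | cons a a' b b' l m hiff hpat ih =>
    obtain ⟨p, r, h1, _⟩ := rle_cons_head a' l
    obtain ⟨q, s, h2, _⟩ := rle_cons_head b' m
    rw [h1, h2] at ih
    simp only [List.map_cons, List.cons.injEq] at ih
    rw [rle_cons_cons a h1, rle_cons_cons b h2]
    by_cases haa : a = a'
    · have hbb : b = b' := hiff.mp haa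
      simp [haa, hbb, ih.1, ih.2]
    · have hbb : b ≠ b' := fun hb => haa (hiff.mpr hb)
      simp [haa, hbb, ih.1, ih.2]


section Poly

variable {A : Type*} [Ring A] [Algebra ℂ A]

lemma monEval_one_replicate (x : A) : ∀ m : ℕ, monEval x ((1 : A) :: List.replicate m 1) = x ^ m
  | 0 => by simp [monEval]
  | (m + 1) => by
    show monEval x (1 :: 1 :: List.replicate m 1) = x ^ (m + 1)
    rw [monEval, monEval_one_replicate x m, one_mul, pow_succ']

/-- The polynomial `X^(m+1)`. -/
def powPoly (A : Type*) [One A] (m : ℕ) : List (ℂ × List A) :=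
  [((1 : ℂ), (1 : A) :: (1 : A) :: List.replicate m 1)]

lemma polyEval_powPoly (x : A) (m : ℕ) : polyEval x (powPoly A m) = x ^ (m + 1) := by
  have : ((1 : A) :: (1 : A) :: List.replicate m 1) = (1 : A) :: List.replicate (m + 1) 1 := by
    simp [List.replicate_succ]
  simp [polyEval, powPoly, this, monEval_one_replicate]

lemma isPoly₀_powPoly (B : NonUnitalSubalgebra ℂ A) (m : ℕ) : IsPoly₀ B (powPoly A m) := by
  intro q hq
  simp only [powPoly, List.mem_singleton] at hq
  subst hq
  refine ⟨by simp, ?_⟩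
  intro b hb
  right
  refine ⟨1, ?_⟩
  simp only [one_smul]
  simp only [List.mem_cons, List.mem_replicate] at hb
  rcases hb with h | h | ⟨_, h⟩ <;> exact h

end Poly

section ZeroSum

variable {C : Type*} [Ring C]

lemma prod_eq_zero_of_adj : ∀ (k : ℕ) (f : Fin (k + 1) → C) (t : Fin k),
    f t.castSucc * f t.succ = 0 → (List.ofFn f).prod = 0
  | 0, _, t, _ => t.elim0
  | (k + 1), f, t, h => by
    rcases Fin.eq_zero_or_eq_succ t with rfl | ⟨s, rfl⟩
    · have h0 : f 0 * f 1 = 0 := by simpa using h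
      rw [List.ofFn_succ, List.ofFn_succ, List.prod_cons, List.prod_cons, ← mul_assoc,
        show f (Fin.succ 0) = f 1 by norm_num, h0, zero_mul]
    · have h' : (fun t : Fin (k + 1) => f t.succ) s.castSucc *
          (fun t : Fin (k + 1) => f t.succ) s.succ = 0 := by
        simp only []
        rw [← Fin.succ_castSucc] at h
        exact h
      rw [List.ofFn_succ, List.prod_cons,
        prod_eq_zero_of_adj k (fun t : Fin (k + 1) => f t.succ) s h', mul_zero]

lemma sum_prod_mul_P {n : ℕ} (u : Fin n → Fin n → C) (P : C)
    (hP : ∀ i, (∑ k, u k i) * P = P) :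
    ∀ (k : ℕ) (i : Fin (k + 1) → Fin n),
      ∑ j : Fin (k + 1) → Fin n, (List.ofFn fun t => u (j t) (i t)).prod * P = P := by
  intro k
  induction k with
  | zero =>
    intro i
    calc ∑ j : Fin 1 → Fin n, (List.ofFn fun t => u (j t) (i t)).prod * P
        = ∑ a : Fin n, u a (i 0) * P := by
          refine Fintype.sum_equiv (Equiv.funUnique (Fin 1) (Fin n)) _ _ ?_
          intro j
          simp [Equiv.funUnique]
      _ = P := by rw [← Finset.sum_mul, hP (i 0)]
  | succ k ih =>
    intro i
    rw [Fintype.sum_equiv ((Fin.consEquiv fun _ : Fin (k + 2) => Fin n).symm)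
      (fun j => (List.ofFn fun t => u (j t) (i t)).prod * P)
      (fun p => (List.ofFn fun t =>
        u (Fin.cons (α := fun _ => Fin n) p.1 p.2 t) (i t)).prod * P)
      (fun j => congrArg (fun q : Fin (k + 2) → Fin n =>
        (List.ofFn fun t => u (q t) (i t)).prod * P) (Fin.cons_self_tail j).symm)]
    rw [Fintype.sum_prod_type]
    have hrw : ∀ (a : Fin n) (j' : Fin (k + 1) → Fin n),
        (List.ofFn fun t : Fin (k + 2) =>
          u (Fin.cons (α := fun _ => Fin n) a j' t) (i t)).prod * P =
          u a (i 0) * ((List.ofFn fun t : Fin (k + 1) => u (j' t) (i t.succ)).prod * P) := by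
      intro a j'
      rw [List.ofFn_succ, List.prod_cons, mul_assoc]
      simp [Fin.cons_zero, Fin.cons_succ]
    calc ∑ a : Fin n, ∑ j' : Fin (k + 1) → Fin n,
          (List.ofFn fun t : Fin (k + 2) =>
            u (Fin.cons (α := fun _ => Fin n) a j' t) (i t)).prod * P
        = ∑ a : Fin n, u a (i 0) * P := by
          refine Finset.sum_congr rfl fun a _ => ?_
          rw [Finset.sum_congr rfl fun j' _ => hrw a j', ← Finset.mul_sum,
            ih (fun t => i t.succ)]
      _ = P := by rw [← Finset.sum_mul, hP (i 0)]

end ZeroSum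

section Main

variable {A : Type*} [Ring A] [Algebra ℂ A] (B : NonUnitalSubalgebra ℂ A) (E : A →ₗ[ℂ] A)
  {n : ℕ} (x : Fin n → A)

lemma boolIndep_list (hbool : BoolIndep B E x)
    (ps : List (Fin n × List (ℂ × List A))) (hne : ps ≠ [])
    (hch : List.Chain' (fun p q => p.1 ≠ q.1) ps)
    (hpoly : ∀ q ∈ ps, IsPoly₀ B q.2) :
    E ((ps.map fun q => polyEval (x q.1) q.2).prod) =
      (ps.map fun q => E (polyEval (x q.1) q.2)).prod := by
  obtain ⟨k, hk⟩ : ∃ k, ps.length = k + 1 :=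
    Nat.exists_eq_succ_of_ne_zero (by simpa using hne)
  have hofn : ∀ (f : Fin n × List (ℂ × List A) → A),
      (List.ofFn fun t : Fin (k + 1) => f (ps.get (Fin.cast hk.symm t))) = ps.map f := by
    intro f
    apply List.ext_getElem
    · simp [hk]
    · intro t h1 h2
      rw [List.getElem_ofFn, List.getElem_map]
      simp [List.get_eq_getElem, Fin.cast]
  have hdist : ∀ t : Fin k, (ps.get (Fin.cast hk.symm t.castSucc)).1 ≠
      (ps.get (Fin.cast hk.symm t.succ)).1 := by
    intro t
    have ht : (t : ℕ) + 1 < ps.length := by omega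
    have := List.isChain_iff_getElem.mp hch t.val ht
    convert this using 3 <;> first | rfl | exact Fin.ext (by simp [Fin.cast])
  have key := hbool k (fun t => (ps.get (Fin.cast hk.symm t)).1) hdist
    (fun t => (ps.get (Fin.cast hk.symm t)).2)
    (fun t => hpoly _ (ps.get_mem _))
  have h1 : (List.ofFn fun t : Fin (k + 1) =>
      polyEval (x (ps.get (Fin.cast hk.symm t)).1) (ps.get (Fin.cast hk.symm t)).2) =
      ps.map fun q => polyEval (x q.1) q.2 := hofn fun q => polyEval (x q.1) q.2
  have h2 : (List.ofFn fun t : Fin (k + 1) =>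
      E (polyEval (x (ps.get (Fin.cast hk.symm t)).1) (ps.get (Fin.cast hk.symm t)).2)) =
      ps.map fun q => E (polyEval (x q.1) q.2) := hofn fun q => E (polyEval (x q.1) q.2)
  rw [h1, h2] at key
  exact key

lemma E_word (hbool : BoolIndep B E x) (hid : IdentDistrib' B E x) (i0 : Fin n)
    (w : List (Fin n)) (hw : w ≠ []) :
    E ((w.map x).prod) = ((rle w).map fun q => E (x i0 ^ q.2)).prod := by
  have hmain := boolIndep_list B E x hbool
    ((rle w).map fun q => (q.1, powPoly A (q.2 - 1)))
    (by simp [rle_eq_nil_iff, hw])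
    (by rw [List.Chain', List.isChain_map]; exact rle_chain' w)
    (by
      intro q hq
      simp only [List.mem_map] at hq
      obtain ⟨p, _, rfl⟩ := hq
      exact isPoly₀_powPoly B _)
  rw [List.map_map, List.map_map] at hmain
  have e1 : ((rle w).map ((fun q : Fin n × List (ℂ × List A) => polyEval (x q.1) q.2) ∘
      fun q : Fin n × ℕ => (q.1, powPoly A (q.2 - 1)))) =
      (rle w).map fun q => x q.1 ^ q.2 := by
    apply List.map_congr_left
    intro q hq
    have hpos : 1 ≤ q.2 := rle_sndpos w q hq
    simp only [Function.comp]
    rw [polyEval_powPoly, Nat.sub_add_cancel hpos]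
  have e2 : ((rle w).map ((fun q : Fin n × List (ℂ × List A) => E (polyEval (x q.1) q.2)) ∘
      fun q : Fin n × ℕ => (q.1, powPoly A (q.2 - 1)))) =
      (rle w).map fun q => E (x i0 ^ q.2) := by
    apply List.map_congr_left
    intro q hq
    have hpos : 1 ≤ q.2 := rle_sndpos w q hq
    simp only [Function.comp]
    rw [hid q.1 i0 (powPoly A (q.2 - 1)) (isPoly₀_powPoly B _), polyEval_powPoly,
      Nat.sub_add_cancel hpos]
  rw [e1, e2] at hmain
  rw [← rle_prod x w]
  exact hmain

lemma pat_ofFn : ∀ (k : ℕ) (j i : Fin (k + 1) → Fin n),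
    (∀ t : Fin k, (j t.castSucc = j t.succ ↔ i t.castSucc = i t.succ)) →
    Pat (List.ofFn j) (List.ofFn i)
  | 0, j, i, _ => by
    simp only [List.ofFn_succ, List.ofFn_zero]
    exact Pat.single _ _
  | (k + 1), j, i, h => by
    have hJ : List.ofFn j = j 0 :: j 1 :: List.ofFn (fun t : Fin k => j t.succ.succ) := by
      simp [List.ofFn_succ]
    have hI : List.ofFn i = i 0 :: i 1 :: List.ofFn (fun t : Fin k => i t.succ.succ) := by
      simp [List.ofFn_succ]
    have hJ' : List.ofFn (fun t : Fin (k + 1) => j t.succ) =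
        j 1 :: List.ofFn (fun t : Fin k => j t.succ.succ) := by
      simp [List.ofFn_succ]
    have hI' : List.ofFn (fun t : Fin (k + 1) => i t.succ) =
        i 1 :: List.ofFn (fun t : Fin k => i t.succ.succ) := by
      simp [List.ofFn_succ]
    have hp := pat_ofFn k (fun t => j t.succ) (fun t => i t.succ) (by
      intro t
      have := h t.succ
      rw [← Fin.succ_castSucc] at this
      exact this)
    rw [hJ', hI'] at hp
    rw [hJ, hI]
    refine Pat.cons _ _ _ _ _ _ ?_ hp
    have := h 0
    simpa using this

end Main


end Stmt5Aux

open Stmt5Aux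

/-- If `(x₁,…,x_n)` is identically distributed and boolean independent over `B` w.r.t. `E`,
and `φ₀` is a linear functional on `B`, then the joint distribution of `(x₁,…,x_n)` with
respect to `φ₀ ∘ E` is invariant under the linear coaction of `𝓑_s(n)`. -/
theorem stmt5 {A : Type*} [Ring A] [Algebra ℂ A] (B : NonUnitalSubalgebra ℂ A)
    (E : A →ₗ[ℂ] A)
    (hrange : ∀ a : A, E a ∈ B)
    (hbimod : ∀ b₁ ∈ B, ∀ b₂ ∈ B, ∀ a : A, E (b₁ * a * b₂) = b₁ * E a * b₂)
    (φ₀ : B →ₗ[ℂ] ℂ)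
    (n : ℕ) (x : Fin n → A)
    (hid : IdentDistrib' B E x) (hbool : BoolIndep B E x)
    (C : Type*) [NormedRing C] [StarRing C] [CStarRing C] [NormedAlgebra ℂ C]
    [CompleteSpace C]
    (u : Fin n → Fin n → C) (P : C) (hu : BsRel u P)
    (k : ℕ) (i : Fin (k + 1) → Fin n) :
    ∑ j : Fin (k + 1) → Fin n,
        φ₀ ⟨E ((List.ofFn fun t => x (j t)).prod), hrange _⟩ •
          (P * (List.ofFn fun t => u (j t) (i t)).prod * P) =
      φ₀ ⟨E ((List.ofFn fun t => x (i t)).prod), hrange _⟩ • P := by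
  classical
  obtain ⟨hstar, hidem, hrow, hcol, hPstar, hPP, hsum⟩ := hu
  set c : ℂ := φ₀ ⟨E ((List.ofFn fun t => x (i t)).prod), hrange _⟩ with hc
  -- Step 1: matching words have the same conditional moment
  have key1 : ∀ j : Fin (k + 1) → Fin n,
      (∀ t : Fin k, (j t.castSucc = j t.succ ↔ i t.castSucc = i t.succ)) →
      E ((List.ofFn fun t => x (j t)).prod) = E ((List.ofFn fun t => x (i t)).prod) := by
    intro j hj
    have hwj : (List.ofFn fun t => x (j t)) = (List.ofFn j).map x := by
      rw [List.map_ofFn]; rfl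
    have hwi : (List.ofFn fun t => x (i t)) = (List.ofFn i).map x := by
      rw [List.map_ofFn]; rfl
    have hne : ∀ f : Fin (k + 1) → Fin n, List.ofFn f ≠ [] := by
      intro f h
      have := congrArg List.length h
      simp at this
    rw [hwj, hwi, E_word B E x hbool hid (i 0) (List.ofFn j) (hne j),
      E_word B E x hbool hid (i 0) (List.ofFn i) (hne i)]
    have hpat : (rle (List.ofFn j)).map Prod.snd = (rle (List.ofFn i)).map Prod.snd :=
      pat_snd (pat_ofFn k j i hj)
    have hm : ∀ w : List (Fin n), ((rle w).map fun q => E (x (i 0) ^ q.2)) =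
        ((rle w).map Prod.snd).map fun m => E (x (i 0) ^ m) := by
      intro w; rw [List.map_map]; rfl
    rw [hm, hm, hpat]
  -- Step 2: non-matching `j` have vanishing `u`-product
  have key2 : ∀ j : Fin (k + 1) → Fin n,
      ¬(∀ t : Fin k, (j t.castSucc = j t.succ ↔ i t.castSucc = i t.succ)) →
      (List.ofFn fun t => u (j t) (i t)).prod = 0 := by
    intro j hj
    obtain ⟨t, ht⟩ := not_forall.mp hj
    apply prod_eq_zero_of_adj k (fun t => u (j t) (i t)) t
    by_cases h1 : j t.castSucc = j t.succ <;> by_cases h2 : i t.castSucc = i t.succ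
    · exact absurd (iff_of_true h1 h2) ht
    · show u (j t.castSucc) (i t.castSucc) * u (j t.succ) (i t.succ) = 0
      rw [← h1]
      exact hrow (j t.castSucc) _ _ h2
    · show u (j t.castSucc) (i t.castSucc) * u (j t.succ) (i t.succ) = 0
      rw [← h2]
      exact hcol (i t.castSucc) _ _ h1
    · exact absurd (iff_of_false h1 h2) ht
  -- Step 3: unrestricted sum of products absorbs into P
  have key3 : ∑ j : Fin (k + 1) → Fin n, (List.ofFn fun t => u (j t) (i t)).prod * P = P :=
    sum_prod_mul_P u P hsum k i
  calc ∑ j : Fin (k + 1) → Fin n,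
        φ₀ ⟨E ((List.ofFn fun t => x (j t)).prod), hrange _⟩ •
          (P * (List.ofFn fun t => u (j t) (i t)).prod * P)
      = ∑ j : Fin (k + 1) → Fin n,
          c • (P * (List.ofFn fun t => u (j t) (i t)).prod * P) := by
        refine Finset.sum_congr rfl fun j _ => ?_
        by_cases hj : ∀ t : Fin k, (j t.castSucc = j t.succ ↔ i t.castSucc = i t.succ)
        · congr 2
          exact Subtype.ext (key1 j hj)
        · rw [key2 j hj, mul_zero, zero_mul, smul_zero, smul_zero]
    _ = c • P := by
        rw [← Finset.smul_sum]
        congr 1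
        calc ∑ j : Fin (k + 1) → Fin n,
              P * (List.ofFn fun t => u (j t) (i t)).prod * P
            = P * ∑ j : Fin (k + 1) → Fin n,
                (List.ofFn fun t => u (j t) (i t)).prod * P := by
              rw [Finset.mul_sum]
              exact Finset.sum_congr rfl fun j _ => (mul_assoc _ _ _)
          _ = P := by rw [key3, hPP]
end

section
/- Let A be a (not necessarily unital) complex associative algebra, B a subalgebra of A, and E : A → B a linear map satisfying E[b₁ a b₂] = b₁ E[a] b₂ for all b₁, b₂ ∈ B and a ∈ A, and E[b] = b for all b ∈ B. Let (A_i)_{i∈I} be a family of subalgebras of A with B ⊆ A_i for every i, which is boolean independent with respect to E: E[a₁·a₂⋯a_k] = E[a₁]·E[a₂]⋯E[a_k] whenever a_t ∈ A_{i_t} and consecutive indices satisfy i₁ ≠ i₂, i₂ ≠ i₃, …, i_{k−1} ≠ i_k. Form the unitization Ā = ℂ·1 ⊕ A (with multiplication (λ·1 + a)(μ·1 + b) = λμ·1 + λb + μa + ab) and define Ē : Ā → B̄ := ℂ·1 ⊕ B by Ē[λ·1 + a] = λ·1 + E[a]. Then the unital subalgebras Ā_i := ℂ·1 ⊕ A_i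 of Ā are freely independent over B̄ with respect to Ē: for every k ≥ 1, every tuple i₁,…,i_k ∈ I with consecutive entries distinct, and all ȳ_t ∈ Ā_{i_t} with Ē[ȳ_t] = 0 for all t, one has Ē[ȳ₁·ȳ₂⋯ȳ_k] = 0. -/
/-- Ordered product `a 0 * a 1 * ⋯ * a k` of a nonempty tuple in a (possibly non-unital)
multiplicative structure. -/
def nprod {A : Type*} [Mul A] : {k : ℕ} → (Fin (k + 1) → A) → A
  | 0, a => a 0
  | _ + 1, a => a 0 * nprod fun t => a t.succ

/-- The canonical extension `Ē` of `E : A → B ⊆ A` to the unitization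
`Ā = ℂ·1 ⊕ A`, given by `Ē[λ·1 + a] = λ·1 + E[a]`. -/
noncomputable def Ebar {A : Type*} [NonUnitalRing A] [Module ℂ A]
    [SMulCommClass ℂ A A] [IsScalarTower ℂ A A]
    (E : A →ₗ[ℂ] A) (y : Unitization ℂ A) : Unitization ℂ A :=
  algebraMap ℂ (Unitization ℂ A) y.fst + Unitization.inr (E y.snd)

lemma nprod_inr {A : Type*} [NonUnitalRing A] [Module ℂ A]
    [SMulCommClass ℂ A A] [IsScalarTower ℂ A A] :
    ∀ {k : ℕ} (a : Fin (k + 1) → A),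
      nprod (fun t => (Unitization.inr (a t) : Unitization ℂ A)) = Unitization.inr (nprod a)
  | 0, a => rfl
  | k + 1, a => by
    simp [nprod, nprod_inr (fun t => a t.succ), Unitization.inr_mul]

lemma nprod_zero {A : Type*} [NonUnitalRing A] :
    ∀ {k : ℕ} (a : Fin (k + 1) → A), (∀ t, a t = 0) → nprod a = 0
  | 0, a, h => h 0
  | k + 1, a, h => by simp [nprod, h 0]

/-- If the subalgebras `(A_i)` (each containing `B`) are boolean independent over `B` with
respect to `E`, then the unital subalgebras `Ā_i = ℂ·1 ⊕ A_i` of the unitization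
`Ā = ℂ·1 ⊕ A` are freely independent over `B̄ = ℂ·1 ⊕ B` with respect to `Ē`:
any ordered product of `Ē`-centered elements from the `Ā_i`, with consecutive indices
distinct, is mapped to `0` by `Ē`.  (An element `ȳ = λ·1 + a` lies in `Ā_i` iff its
`A`-component `a` lies in `A_i`.) -/
theorem stmt7 {A : Type*} [NonUnitalRing A] [Module ℂ A]
    [SMulCommClass ℂ A A] [IsScalarTower ℂ A A]
    (B : NonUnitalSubalgebra ℂ A) (E : A →ₗ[ℂ] A)
    (hrange : ∀ a : A, E a ∈ B)
    (hbimod : ∀ b₁ ∈ B, ∀ b₂ ∈ B, ∀ a : A, E (b₁ * a * b₂) = b₁ * E a * b₂)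
    (hid : ∀ b ∈ B, E b = b)
    {ι : Type*} (Ai : ι → NonUnitalSubalgebra ℂ A) (hBA : ∀ i, B ≤ Ai i)
    (hbool : ∀ (k : ℕ) (idx : Fin (k + 1) → ι),
      (∀ t : Fin k, idx t.castSucc ≠ idx t.succ) →
      ∀ a : Fin (k + 1) → A, (∀ t, a t ∈ Ai (idx t)) →
        E (nprod a) = nprod fun t => E (a t)) :
    ∀ (k : ℕ) (idx : Fin (k + 1) → ι),
      (∀ t : Fin k, idx t.castSucc ≠ idx t.succ) →
      ∀ y : Fin (k + 1) → Unitization ℂ A,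
        (∀ t, (y t).snd ∈ Ai (idx t)) →
        (∀ t, Ebar E (y t) = 0) →
        Ebar E (nprod y) = 0 := by
  intro k idx hne y hmem hcent
  have hfst : ∀ t, (y t).fst = 0 := fun t => by
    have := congrArg (fun z : Unitization ℂ A => z.fst) (hcent t)
    simpa [Ebar, Unitization.algebraMap_eq_inl] using this
  have hE : ∀ t, E ((y t).snd) = 0 := fun t => by
    have := congrArg (fun z : Unitization ℂ A => z.snd) (hcent t)
    simpa [Ebar, Unitization.algebraMap_eq_inl] using this
  have hy : nprod y = Unitization.inr (nprod fun t => (y t).snd) := by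
    rw [← nprod_inr]
    congr 1
    funext t
    exact (Unitization.ext (by simp [hfst t]) (by simp)).symm
  rw [hy]
  simp [Ebar, hbool k idx hne _ hmem, nprod_zero _ hE]
end
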